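/- arXiv:1504.05499 — 3 statements merged into one kernel-verified Lean document; each statement's English description precedes it below -/
import Mathlib

section
/- Distribution formula: for every positive integer w, natural number m, real q with 0 < q < 1, and real x, β_{m,q}(w·x) = [w]_q^{m-1} · ∑_{k=0}^{w-1} q^k · β_{m,q^w}((x·w + k)/w · 1), i.e., β_{m,q}(wx) = [w]_q^{m-1} ∑_{k=0}^{w-1} q^k β_{m,q^w}(x + k/w). -/
/-- The real `q`-analogue `[z]_r = (1 - r^z)/(1 - r)` using real powers. -/
noncomputable def qReal (r z : ℝ) : ℝ := (1 - r ^ z) / (1 - r)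

/-- The Carlitz `q`-Bernoulli polynomial
`β_{n,q}(x) = ∑_{l=0}^n C(n,l) q^{lx} [x]_q^{n-l} β_l` (real `x`, real powers),
built from a sequence `β` of `q`-Bernoulli numbers. -/
noncomputable def qBernoulliPoly (q : ℝ) (β : ℕ → ℝ) (n : ℕ) (x : ℝ) : ℝ :=
  ∑ l ∈ Finset.range (n + 1), (n.choose l : ℝ) * q ^ ((l : ℝ) * x) * (qReal q x) ^ (n - l) * β l

/-- The Carlitz recurrence: `β 0 = 1` and
`q·∑_{k=0}^{n} C(n,k) q^k β k − β n = δ_{n,1}` for `n ≥ 1`. -/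
def IsCarlitz (q : ℝ) (β : ℕ → ℝ) : Prop :=
  β 0 = 1 ∧ ∀ n : ℕ, 1 ≤ n →
    q * ∑ k ∈ Finset.range (n + 1), (n.choose k : ℝ) * q ^ k * β k - β n =
      if n = 1 then 1 else 0

open Finset

noncomputable def ccq (q : ℝ) (i : ℕ) : ℝ :=
  (-1 : ℝ) ^ i * (i + 1 : ℝ) * (1 - q) / (1 - q ^ (i + 1))


noncomputable def Bq (q : ℝ) (n : ℕ) : ℝ :=
  (∑ i ∈ range (n + 1), (n.choose i : ℝ) * ccq q i) / (1 - q) ^ n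


lemma tswap (n : ℕ) (a c : ℕ → ℝ) :
    ∑ k ∈ range (n + 1), (n.choose k : ℝ) * a k * ∑ i ∈ range (k + 1), (k.choose i : ℝ) * c i
    = ∑ i ∈ range (n + 1), (n.choose i : ℝ) * c i *
        ∑ j ∈ range (n - i + 1), ((n - i).choose j : ℝ) * a (i + j) := by
  have L : ∑ k ∈ range (n + 1), (n.choose k : ℝ) * a k *
        ∑ i ∈ range (k + 1), (k.choose i : ℝ) * c i
      = ∑ k ∈ range (n + 1), ∑ i ∈ range (n + 1),
          (n.choose k : ℝ) * (k.choose i : ℝ) * (a k * c i) := by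
    refine sum_congr rfl fun k hk => ?_
    rw [Finset.sum_subset (Finset.range_subset_range.2 (Nat.succ_le_succ (Nat.lt_succ_iff.mp
      (mem_range.mp hk)))) (fun i _ hi => by
        rw [Nat.choose_eq_zero_of_lt (Nat.lt_of_succ_le (Nat.succ_le_of_lt
          (by simpa using hi)))]
        simp), Finset.mul_sum]
    exact sum_congr rfl fun i _ => by ring
  rw [L, Finset.sum_comm]
  refine sum_congr rfl fun i hi => ?_
  have hin : i ≤ n := Nat.lt_succ_iff.mp (mem_range.mp hi)
  have step1 : ∑ k ∈ range (n + 1), (n.choose k : ℝ) * (k.choose i : ℝ) * (a k * c i)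
      = ∑ k ∈ Ico i (n + 1), (n.choose k : ℝ) * (k.choose i : ℝ) * (a k * c i) := by
    refine (Finset.sum_subset (by
      intro k hk
      simp only [mem_Ico] at hk
      exact mem_range.mpr hk.2) (fun k hk hk' => ?_)).symm
    have : k < i := by
      simp only [mem_Ico, mem_range] at hk hk'
      omega
    rw [Nat.choose_eq_zero_of_lt this]
    simp
  rw [step1, Finset.sum_Ico_eq_sum_range, Finset.mul_sum]
  have hni : n + 1 - i = n - i + 1 := by omega
  rw [hni]
  refine sum_congr rfl fun j hj => ?_
  have hjn : j ≤ n - i := Nat.lt_succ_iff.mp (mem_range.mp hj)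
  have key : (n.choose (i + j) : ℝ) * ((i + j).choose i : ℝ)
      = (n.choose i : ℝ) * ((n - i).choose j : ℝ) := by
    have := Nat.choose_mul (n := n) (Nat.le_add_right i j)
    have h2 : i + j - i = j := by omega
    rw [h2] at this
    exact_mod_cast congrArg (Nat.cast : ℕ → ℝ) this
  calc (n.choose (i+j) : ℝ) * ((i+j).choose i : ℝ) * (a (i+j) * c i)
      = (n.choose i : ℝ) * ((n-i).choose j : ℝ) * (a (i+j) * c i) := by rw [key]
    _ = (n.choose i : ℝ) * c i * (((n-i).choose j : ℝ) * a (i+j)) := by ring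


lemma altchoose (n : ℕ) (hn : 1 ≤ n) :
    ∑ i ∈ range (n + 1), (n.choose i : ℝ) * (-1) ^ i = 0 := by
  have h := add_pow (-1 : ℝ) 1 n
  simp only [one_pow, mul_one, neg_add_cancel] at h
  rw [zero_pow (by omega)] at h
  rw [h]
  exact sum_congr rfl fun i _ => by ring


lemma altsum (n : ℕ) (hn : 1 ≤ n) :
    ∑ i ∈ range (n + 1), (n.choose i : ℝ) * (-1) ^ i * (i + 1 : ℝ)
      = if n = 1 then -1 else 0 := by
  have split : ∑ i ∈ range (n + 1), (n.choose i : ℝ) * (-1) ^ i * (i + 1 : ℝ)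
      = (∑ i ∈ range (n + 1), (n.choose i : ℝ) * (-1) ^ i)
        + ∑ i ∈ range (n + 1), (n.choose i : ℝ) * (-1) ^ i * (i : ℝ) := by
    rw [← Finset.sum_add_distrib]
    exact sum_congr rfl fun i _ => by ring
  rw [split, altchoose n hn, zero_add]
  obtain ⟨n', rfl⟩ : ∃ n', n = n' + 1 := ⟨n - 1, by omega⟩
  -- reindex: sum over i = j+1
  rw [Finset.sum_range_succ'] -- splits off i = 0
  simp only [Nat.cast_zero, mul_zero, add_zero]
  have term : ∀ j, ((n' + 1).choose (j + 1) : ℝ) * (-1) ^ (j + 1) * ((j + 1 : ℕ) : ℝ)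
      = -((n' + 1 : ℝ)) * ((n'.choose j : ℝ) * (-1) ^ j) := by
    intro j
    have h := Nat.add_one_mul_choose_eq n' j
    have h' : ((n' + 1) * n'.choose j : ℝ) = ((n' + 1).choose (j + 1) : ℝ) * ((j + 1 : ℕ) : ℝ) := by
      exact_mod_cast congrArg (Nat.cast : ℕ → ℝ) h
    push_cast at h' ⊢
    have e1 : ((n'+1).choose (j+1) : ℝ) * (-1:ℝ)^(j+1) * ((j:ℝ)+1)
        = (((n'+1).choose (j+1) : ℝ) * ((j:ℝ)+1)) * (-1:ℝ)^(j+1) := by ring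
    rw [e1, ← h', pow_succ]
    ring
  rw [Finset.sum_congr rfl fun j _ => term j, ← Finset.mul_sum]
  rcases Nat.eq_zero_or_pos n' with h0 | h1
  · subst h0; norm_num
  · rw [altchoose n' h1]
    have : n' + 1 ≠ 1 := by omega
    simp [this]
    omega


lemma binom_eval (M : ℕ) (t : ℝ) :
    ∑ j ∈ range (M + 1), (M.choose j : ℝ) * t ^ j = (t + 1) ^ M := by
  rw [add_pow]
  exact sum_congr rfl fun j _ => by rw [one_pow]; ring


lemma isCarlitz_Bq (q : ℝ) (hq0 : 0 < q) (hq1 : q < 1) : IsCarlitz q (Bq q) := by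
  have hB : (0:ℝ) < 1 - q := by linarith
  have hBne : (1 - q) ≠ 0 := ne_of_gt hB
  have hpow : ∀ i : ℕ, 1 - q ^ (i+1) ≠ 0 := fun i =>
    ne_of_gt (by have := pow_lt_one₀ hq0.le hq1 (by omega : i + 1 ≠ 0); linarith)
  constructor
  · simp only [Bq, ccq, pow_zero]
    rw [Finset.sum_range_one]
    simp only [Nat.choose_self, Nat.cast_one, pow_zero, pow_one, Nat.cast_zero]
    norm_num [hBne]
  · intro n hn
    have e1 : ∑ k ∈ range (n+1), (n.choose k : ℝ) * q ^ k * Bq q k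
        = ∑ k ∈ range (n+1), (n.choose k : ℝ) * (q ^ k / (1-q) ^ k) *
            ∑ i ∈ range (k+1), (k.choose i : ℝ) * ccq q i := by
      refine sum_congr rfl fun k _ => ?_
      rw [Bq]
      ring
    rw [e1, tswap n (fun k => q ^ k / (1-q) ^ k) (ccq q)]
    have e2 : ∀ i ∈ range (n+1),
        (n.choose i : ℝ) * ccq q i *
          ∑ j ∈ range (n-i+1), ((n-i).choose j : ℝ) * (q ^ (i+j) / (1-q) ^ (i+j))
        = (n.choose i : ℝ) * ccq q i * (q ^ i / (1-q) ^ n) := by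
      intro i hi
      have hin : i ≤ n := Nat.lt_succ_iff.mp (mem_range.mp hi)
      congr 1
      have estep : ∑ j ∈ range (n-i+1), ((n-i).choose j : ℝ) * (q ^ (i+j) / (1-q) ^ (i+j))
          = (q/(1-q)) ^ i * ∑ j ∈ range (n-i+1), ((n-i).choose j : ℝ) * (q/(1-q)) ^ j := by
        rw [Finset.mul_sum]
        refine sum_congr rfl fun j _ => ?_
        rw [div_pow, div_pow, pow_add, pow_add]
        field_simp
      rw [estep, binom_eval]
      have : q / (1-q) + 1 = 1 / (1-q) := by field_simp; ring
      rw [this, div_pow, div_pow, one_pow]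
      rw [div_mul_div_comm, ← pow_add, Nat.add_sub_cancel' hin]
      ring
    rw [Finset.sum_congr rfl e2]
    have e3 : Bq q n = ∑ i ∈ range (n+1), (n.choose i : ℝ) * ccq q i * (1 / (1-q) ^ n) := by
      rw [Bq, Finset.sum_div]
      exact sum_congr rfl fun i _ => by ring
    rw [Finset.mul_sum, e3, ← Finset.sum_sub_distrib]
    have e4 : ∀ i ∈ range (n+1),
        q * ((n.choose i : ℝ) * ccq q i * (q ^ i / (1-q) ^ n))
          - (n.choose i : ℝ) * ccq q i * (1 / (1-q) ^ n)
        = ((n.choose i : ℝ) * (-1)^i * (i+1:ℝ)) * (-(1-q) / (1-q)^n) := by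
      intro i _
      have hd : (q ^ (i+1) - 1) / (1 - q ^ (i+1)) = -1 := by
        rw [div_eq_iff (hpow i)]; ring
      have hcc : ccq q i * (q ^ (i+1) - 1) = -((-1:ℝ)^i * (i+1:ℝ) * (1-q)) := by
        calc ccq q i * (q ^ (i+1) - 1)
            = ((-1:ℝ)^i * (i+1:ℝ) * (1-q)) * ((q ^ (i+1) - 1) / (1 - q ^ (i+1))) := by
              rw [ccq]; ring
          _ = _ := by rw [hd]; ring
      have expand : q * ((n.choose i : ℝ) * ccq q i * (q ^ i / (1-q) ^ n))
          - (n.choose i : ℝ) * ccq q i * (1 / (1-q) ^ n)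
          = (n.choose i : ℝ) * (ccq q i * (q ^ (i+1) - 1)) / (1-q)^n := by
        rw [pow_succ]
        ring
      rw [expand, hcc]
      ring
    rw [Finset.sum_congr rfl e4, ← Finset.sum_mul, altsum n hn]
    rcases eq_or_ne n 1 with h1 | h1
    · subst h1
      simp only [if_pos rfl]
      rw [pow_one]
      field_simp
      simp
    · simp [h1]


lemma eq_Bq (q : ℝ) (hq0 : 0 < q) (hq1 : q < 1) (β : ℕ → ℝ) (hβ : IsCarlitz q β) :
    ∀ n, β n = Bq q n := by
  have hC := isCarlitz_Bq q hq0 hq1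
  intro n
  induction n using Nat.strong_induction_on with
  | _ n ih =>
    match n with
    | 0 => rw [hβ.1, hC.1]
    | Nat.succ n' =>
      have h1 := hβ.2 (n' + 1) (by omega)
      have h2 := hC.2 (n' + 1) (by omega)
      rw [Finset.sum_range_succ] at h1 h2
      have hs : ∑ k ∈ range (n' + 1), ((n' + 1).choose k : ℝ) * q ^ k * β k
          = ∑ k ∈ range (n' + 1), ((n' + 1).choose k : ℝ) * q ^ k * Bq q k :=
        sum_congr rfl fun k hk => by rw [ih k (mem_range.mp hk)]
      simp only [Nat.choose_self, Nat.cast_one, one_mul] at h1 h2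
      have hkey : (q ^ (n' + 2) - 1) * (β (n' + 1) - Bq q (n' + 1)) = 0 := by
        have := sub_eq_zero_of_eq (h1.trans h2.symm)
        rw [hs] at this
        linear_combination this
      have hne : q ^ (n' + 2) - 1 ≠ 0 := by
        have := pow_lt_one₀ hq0.le hq1 (by omega : n' + 2 ≠ 0)
        intro h; nlinarith
      have := (mul_eq_zero.mp hkey).resolve_left hne
      linarith [sub_eq_zero.mp this]


lemma binom_eval2 (M : ℕ) (u v : ℝ) :
    ∑ j ∈ range (M + 1), (M.choose j : ℝ) * (u ^ j * v ^ (M - j)) = (u + v) ^ M := by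
  rw [add_pow]
  exact sum_congr rfl fun j _ => by ring


lemma poly_closed (q : ℝ) (hq0 : 0 < q) (hq1 : q < 1) (β : ℕ → ℝ) (hβ : IsCarlitz q β)
    (m : ℕ) (x : ℝ) :
    qBernoulliPoly q β m x
      = (∑ i ∈ range (m + 1), (m.choose i : ℝ) * ccq q i * q ^ ((i : ℝ) * x)) / (1 - q) ^ m := by
  have hBne : (1 - q) ≠ 0 := by intro h; nlinarith
  have e1 : qBernoulliPoly q β m x
      = ∑ l ∈ range (m + 1), (m.choose l : ℝ)
          * (q ^ ((l : ℝ) * x) * (1 - q ^ x) ^ (m - l) / (1 - q) ^ m)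
          * ∑ i ∈ range (l + 1), (l.choose i : ℝ) * ccq q i := by
    rw [qBernoulliPoly]
    refine sum_congr rfl fun l hl => ?_
    have hlm : l ≤ m := Nat.lt_succ_iff.mp (mem_range.mp hl)
    rw [eq_Bq q hq0 hq1 β hβ l, Bq, qReal, div_pow]
    have hsplit : (1 - q) ^ (m - l) * (1 - q) ^ l = (1 - q) ^ m := by
      rw [← pow_add, Nat.sub_add_cancel hlm]
    field_simp
    rw [← hsplit]
    ring
  rw [e1, tswap m (fun l => q ^ ((l : ℝ) * x) * (1 - q ^ x) ^ (m - l) / (1 - q) ^ m) (ccq q)]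
  rw [Finset.sum_div]
  refine sum_congr rfl fun i hi => ?_
  have him : i ≤ m := Nat.lt_succ_iff.mp (mem_range.mp hi)
  have inner : ∑ j ∈ range (m - i + 1), ((m - i).choose j : ℝ)
      * (q ^ (((i + j : ℕ) : ℝ) * x) * (1 - q ^ x) ^ (m - (i + j)) / (1 - q) ^ m)
      = q ^ ((i : ℝ) * x) / (1 - q) ^ m := by
    have estep : ∀ j ∈ range (m - i + 1),
        ((m - i).choose j : ℝ) * (q ^ (((i + j : ℕ) : ℝ) * x) * (1 - q ^ x) ^ (m - (i + j)) / (1 - q) ^ m)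
        = (q ^ ((i : ℝ) * x) / (1 - q) ^ m)
            * (((m - i).choose j : ℝ) * ((q ^ x) ^ j * (1 - q ^ x) ^ (m - i - j))) := by
      intro j hj
      have hj' : j ≤ m - i := Nat.lt_succ_iff.mp (mem_range.mp hj)
      have hexp : q ^ (((i + j : ℕ) : ℝ) * x) = q ^ ((i : ℝ) * x) * (q ^ x) ^ j := by
        push_cast
        rw [add_mul, Real.rpow_add hq0]
        congr 1
        rw [mul_comm (j : ℝ) x, Real.rpow_mul hq0.le, Real.rpow_natCast]
      have hsub : m - (i + j) = m - i - j := by omega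
      rw [hexp, hsub]
      ring
    rw [Finset.sum_congr rfl estep, ← Finset.mul_sum, binom_eval2]
    simp
  rw [inner]
  ring


theorem qBernoulli_distribution (q : ℝ) (hq0 : 0 < q) (hq1 : q < 1)
    (β : ℝ → ℕ → ℝ) (hβ : ∀ r : ℝ, 0 < r → r < 1 → IsCarlitz r (β r))
    (w : ℕ) (hw : 0 < w) (m : ℕ) (x : ℝ) :
    qBernoulliPoly q (β q) m ((w : ℝ) * x) =
      (qReal q (w : ℝ)) ^ ((m : ℤ) - 1) *
        ∑ k ∈ Finset.range w,
          q ^ k * qBernoulliPoly (q ^ w) (β (q ^ w)) m (x + (k : ℝ) / (w : ℝ)) := by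
  have hB : (0:ℝ) < 1 - q := by linarith
  have hBne : (1 - q) ≠ 0 := ne_of_gt hB
  have hwne : (w : ℝ) ≠ 0 := Nat.cast_ne_zero.mpr hw.ne'
  have hqw0 : 0 < q ^ w := pow_pos hq0 w
  have hqw1 : q ^ w < 1 := pow_lt_one₀ hq0.le hq1 hw.ne'
  have hA : (0:ℝ) < 1 - q ^ w := by linarith
  have hAne : (1 - q ^ w) ≠ 0 := ne_of_gt hA
  have hq1ne : ∀ i : ℕ, q ^ (i + 1) ≠ 1 := fun i =>
    ne_of_lt (pow_lt_one₀ hq0.le hq1 (by omega))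
  have hpowne : ∀ i : ℕ, 1 - q ^ (i + 1) ≠ 0 := fun i => by
    have := hq1ne i; intro h; apply this; linarith
  rw [poly_closed q hq0 hq1 _ (hβ q hq0 hq1)]
  have erw : ∀ k ∈ range w, q ^ k * qBernoulliPoly (q ^ w) (β (q ^ w)) m (x + (k : ℝ) / (w : ℝ))
      = (∑ i ∈ range (m + 1), (m.choose i : ℝ) *
          (ccq (q ^ w) i * (q ^ k * (q ^ w) ^ ((i : ℝ) * (x + (k : ℝ) / (w : ℝ)))))) / (1 - q ^ w) ^ m := by
    intro k _
    rw [poly_closed (q ^ w) hqw0 hqw1 _ (hβ (q ^ w) hqw0 hqw1), mul_div_assoc', Finset.mul_sum]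
    congr 1
    exact sum_congr rfl fun i _ => by ring
  rw [Finset.sum_congr rfl erw, ← Finset.sum_div, Finset.sum_comm]
  -- evaluate inner sums over k
  have inner : ∀ i ∈ range (m + 1),
      ∑ k ∈ range w, (m.choose i : ℝ) *
          (ccq (q ^ w) i * (q ^ k * (q ^ w) ^ ((i : ℝ) * (x + (k : ℝ) / (w : ℝ)))))
      = (m.choose i : ℝ) * ccq q i * q ^ ((i : ℝ) * ((w : ℝ) * x)) * ((1 - q ^ w) / (1 - q)) := by
    intro i _
    have hterm : ∀ k ∈ range w,
        (m.choose i : ℝ) * (ccq (q ^ w) i * (q ^ k * (q ^ w) ^ ((i : ℝ) * (x + (k : ℝ) / (w : ℝ)))))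
        = (m.choose i : ℝ) * ccq (q ^ w) i * q ^ ((i : ℝ) * ((w : ℝ) * x)) * (q ^ (i + 1)) ^ k := by
      intro k _
      have hbase : (q ^ w : ℝ) ^ ((i : ℝ) * (x + (k : ℝ) / (w : ℝ)))
          = q ^ ((w : ℝ) * ((i : ℝ) * (x + (k : ℝ) / (w : ℝ)))) := by
        rw [← Real.rpow_natCast q w, ← Real.rpow_mul hq0.le]
      have hexp : (w : ℝ) * ((i : ℝ) * (x + (k : ℝ) / (w : ℝ)))
          = (i : ℝ) * ((w : ℝ) * x) + ((i * k : ℕ) : ℝ) := by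
        push_cast
        field_simp
      have hsplit : q ^ ((i : ℝ) * ((w : ℝ) * x) + ((i * k : ℕ) : ℝ))
          = q ^ ((i : ℝ) * ((w : ℝ) * x)) * q ^ (i * k) := by
        rw [Real.rpow_add hq0, Real.rpow_natCast]
      have hpowk : q ^ k * q ^ (i * k) = (q ^ (i + 1)) ^ k := by
        rw [← pow_add, ← pow_mul]
        congr 1
        ring
      rw [hbase, hexp, hsplit]
      calc (m.choose i : ℝ) * (ccq (q ^ w) i * (q ^ k * (q ^ ((i:ℝ) * ((w:ℝ) * x)) * q ^ (i * k))))
          = (m.choose i : ℝ) * ccq (q ^ w) i * q ^ ((i:ℝ) * ((w:ℝ) * x)) * (q ^ k * q ^ (i * k)) := by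
            ring
        _ = _ := by rw [hpowk]
    have hcc : ccq (q ^ w) i * (((q ^ (i + 1)) ^ w - 1) / (q ^ (i + 1) - 1))
        = ccq q i * ((1 - q ^ w) / (1 - q)) := by
      have h1 : 1 - (q ^ w) ^ (i + 1) ≠ 0 := by
        have := pow_lt_one₀ hqw0.le hqw1 (by omega : i + 1 ≠ 0)
        intro h; linarith
      have h2 : q ^ (i + 1) - 1 ≠ 0 := sub_ne_zero.mpr (hq1ne i)
      have h3 := hpowne i
      rw [pow_right_comm, ccq, ccq]
      field_simp
      ring
    rw [Finset.sum_congr rfl hterm, ← Finset.mul_sum, geom_sum_eq (hq1ne i) w]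
    calc (m.choose i : ℝ) * ccq (q ^ w) i * q ^ ((i : ℝ) * ((w : ℝ) * x))
          * (((q ^ (i + 1)) ^ w - 1) / (q ^ (i + 1) - 1))
        = (m.choose i : ℝ) * q ^ ((i : ℝ) * ((w : ℝ) * x))
            * (ccq (q ^ w) i * (((q ^ (i + 1)) ^ w - 1) / (q ^ (i + 1) - 1))) := by ring
      _ = (m.choose i : ℝ) * q ^ ((i : ℝ) * ((w : ℝ) * x))
            * (ccq q i * ((1 - q ^ w) / (1 - q))) := by rw [hcc]
      _ = _ := by ring
  rw [Finset.sum_congr rfl inner, ← Finset.sum_mul]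
  rw [qReal, Real.rpow_natCast]
  have hz : ((1 - q ^ w) / (1 - q)) ^ ((m : ℤ) - 1) * ((1 - q ^ w) / (1 - q))
      = ((1 - q ^ w) / (1 - q)) ^ m := by
    rw [← zpow_natCast _ m, ← zpow_add_one₀ (div_ne_zero hAne hBne)]
    norm_num
  set G := ∑ i ∈ range (m + 1), (m.choose i : ℝ) * ccq q i * q ^ ((i : ℝ) * ((w : ℝ) * x)) with hG
  calc G / (1 - q) ^ m
      = ((1 - q ^ w) / (1 - q)) ^ m * (G / (1 - q ^ w) ^ m) := by
        rw [div_pow]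
        field_simp
    _ = (((1 - q ^ w) / (1 - q)) ^ ((m : ℤ) - 1) * ((1 - q ^ w) / (1 - q))) * (G / (1 - q ^ w) ^ m) := by
        rw [hz]
    _ = ((1 - q ^ w) / (1 - q)) ^ ((m : ℤ) - 1) * (G * ((1 - q ^ w) / (1 - q)) / (1 - q ^ w) ^ m) := by
        ring
end

section
/- Symmetry identity (n = 2 case of Theorem 3): for all natural numbers m, positive integers w₁, w₂, real q with 0 < q < 1, and real x, the expression ∑_{l=0}^{m} C(m,l) [w₁]_q^{l-1} [w₂]_q^{m-l} β_{l,q^{w₁}}(w₂x) · T_{m,q^{w₂}}(w₁ | l) is symmetric under interchanging w₁ and w₂, where T_{m,r}(w | l) = ∑_{k=0}^{w-1} r^{(l+1)k} [k]_r^{m-l}. -/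
/-- The sum `T_{m,r}(w | l) = ∑_{k=0}^{w-1} r^{(l+1)k} [k]_r^{m-l}`. -/
noncomputable def Tsum (m : ℕ) (r : ℝ) (w : ℕ) (l : ℕ) : ℝ :=
  ∑ k ∈ Finset.range w, r ^ ((l + 1) * k) * (qReal r (k : ℝ)) ^ (m - l)


open Finset

/-- Key binomial collapse identity. -/
lemma collapse (m : ℕ) (u : ℝ) (c : ℕ → ℝ) :
    ∑ l ∈ range (m+1), (m.choose l : ℝ) * u^l * (1-u)^(m-l) *
        (∑ i ∈ range (l+1), (l.choose i : ℝ) * c i)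
    = ∑ i ∈ range (m+1), (m.choose i : ℝ) * u^i * c i := by
  calc
    _ = ∑ l ∈ range (m+1), ∑ i ∈ range (l+1),
        (m.choose l : ℝ) * u^l * (1-u)^(m-l) * ((l.choose i : ℝ) * c i) := by
      apply Finset.sum_congr rfl; intro l _; rw [Finset.mul_sum]
    _ = ∑ i ∈ range (m+1), ∑ l ∈ Ico i (m+1),
        (m.choose l : ℝ) * u^l * (1-u)^(m-l) * ((l.choose i : ℝ) * c i) := by
      simpa only [range_eq_Ico] using
        (Finset.sum_Ico_Ico_comm 0 (m+1)
          (fun i l => (m.choose l : ℝ) * u^l * (1-u)^(m-l) * ((l.choose i : ℝ) * c i))).symm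
    _ = ∑ i ∈ range (m+1), (m.choose i : ℝ) * u^i * c i := by
      apply Finset.sum_congr rfl
      intro i hi
      rw [mem_range, Nat.lt_succ_iff] at hi
      have step : ∑ l ∈ Ico i (m+1),
          (m.choose l : ℝ) * u^l * (1-u)^(m-l) * ((l.choose i : ℝ) * c i)
          = (m.choose i : ℝ) * c i * ∑ l ∈ Ico i (m+1),
            (((m-i).choose (l-i) : ℝ) * u^l * (1-u)^(m-l)) := by
        rw [Finset.mul_sum]
        apply Finset.sum_congr rfl
        intro l hl
        rw [mem_Ico, Nat.lt_succ_iff] at hl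
        have h1 : (m.choose l : ℝ) * (l.choose i : ℝ)
            = (m.choose i : ℝ) * ((m-i).choose (l-i) : ℝ) := by
          rw [← Nat.cast_mul, ← Nat.cast_mul, Nat.choose_mul hl.1]
        linear_combination u^l * (1-u)^(m-l) * c i * h1
      rw [step]
      have reindex : ∑ l ∈ Ico i (m+1), (((m-i).choose (l-i) : ℝ) * u^l * (1-u)^(m-l))
          = ∑ j ∈ range (m-i+1), (((m-i).choose j : ℝ) * u^(i+j) * (1-u)^(m-i-j)) := by
        rw [Finset.sum_Ico_eq_sum_range]
        have : m + 1 - i = m - i + 1 := by omega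
        rw [this]
        apply Finset.sum_congr rfl
        intro j _
        have h2 : i + j - i = j := by omega
        have h3 : m - (i + j) = m - i - j := by omega
        rw [h2, h3]
      rw [reindex]
      have hp : (1:ℝ) = (u + (1-u))^(m-i) := by ring
      have expand := add_pow u (1-u) (m-i)
      have : ∑ j ∈ range (m-i+1), (((m-i).choose j : ℝ) * u^(i+j) * (1-u)^(m-i-j))
          = u^i * ∑ j ∈ range (m-i+1), u^j * (1-u)^(m-i-j) * ((m-i).choose j : ℝ) := by
        rw [Finset.mul_sum]
        apply Finset.sum_congr rfl
        intro j _
        rw [pow_add]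
        ring
      rw [this, ← expand]
      have : u + (1-u) = 1 := by ring
      rw [this, one_pow]
      ring

noncomputable def cb (r : ℝ) (i : ℕ) : ℝ := (-1)^i * (i+1) / (1 - r^(i+1))

noncomputable def bnum (r : ℝ) (n : ℕ) : ℝ :=
  (1-r) / (1-r)^n * ∑ i ∈ Finset.range (n+1), (n.choose i : ℝ) * cb r i

lemma alt1 (n : ℕ) :
    ∑ i ∈ range (n+1), (n.choose i : ℝ) * (-1)^i = if n = 0 then 1 else 0 := by
  have h := Int.alternating_sum_range_choose (n := n)
  apply_fun (Int.cast : ℤ → ℝ) at h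
  push_cast at h
  rw [← h]
  apply Finset.sum_congr rfl
  intro i _
  ring

lemma alt2 (n : ℕ) (hn : 2 ≤ n) :
    ∑ i ∈ range (n+1), (n.choose i : ℝ) * (-1)^i * (i+1 : ℝ) = 0 := by
  have split : ∀ i : ℕ, (n.choose i : ℝ) * (-1)^i * (i+1 : ℝ)
      = (n.choose i : ℝ) * (-1)^i * (i : ℝ) + (n.choose i : ℝ) * (-1)^i := by
    intro i; ring
  rw [Finset.sum_congr rfl (fun i _ => split i), Finset.sum_add_distrib, alt1,
    if_neg (by omega)]
  have h1 : ∑ i ∈ range (n+1), (n.choose i : ℝ) * (-1)^i * (i : ℝ) = 0 := by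
    rw [Finset.sum_range_succ']
    simp only [Nat.cast_zero, mul_zero, add_zero]
    have e : ∀ i : ℕ, (n.choose (i+1) : ℝ) * (-1)^(i+1) * ((i+1 : ℕ) : ℝ)
        = -(n : ℝ) * (((n-1).choose i : ℝ) * (-1)^i) := by
      intro i
      have := Nat.add_one_mul_choose_eq (n-1) i
      have hn1 : n - 1 + 1 = n := by omega
      simp only [Nat.succ_eq_add_one, hn1] at this
      have hc : (n : ℝ) * ((n-1).choose i : ℝ) = (n.choose (i+1) : ℝ) * ((i+1 : ℕ) : ℝ) := by
        exact_mod_cast congrArg (Nat.cast : ℕ → ℝ) this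
      push_cast at hc ⊢
      linear_combination ((-1:ℝ))^i * hc
    rw [Finset.sum_congr rfl (fun i _ => e i), ← Finset.mul_sum]
    have hn1 : n - 1 + 1 = n := by omega
    have := alt1 (n-1)
    rw [hn1] at this
    rw [this, if_neg (by omega), mul_zero]
  linarith

lemma one_sub_pow_ne (r : ℝ) (h0 : 0 < r) (h1 : r < 1) (k : ℕ) (hk : 1 ≤ k) :
    1 - r^k ≠ 0 := by
  have : r^k < 1 := pow_lt_one₀ h0.le h1 (by omega)
  linarith

lemma bnum_carlitz (r : ℝ) (h0 : 0 < r) (h1 : r < 1) : IsCarlitz r (bnum r) := by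
  have h1r : (1:ℝ) - r ≠ 0 := by linarith
  have hne : ∀ i : ℕ, (1:ℝ) - r^(i+1) ≠ 0 := fun i => one_sub_pow_ne r h0 h1 _ (by omega)
  constructor
  · simp only [bnum, cb]
    norm_num
    field_simp
  · intro n hn
    have key : ∑ k ∈ range (n+1), (n.choose k : ℝ) * r^k * bnum r k
        = (1-r)/(1-r)^n * ∑ i ∈ range (n+1), (n.choose i : ℝ) * r^i * cb r i := by
      have e1 : ∀ k ∈ range (n+1), (n.choose k : ℝ) * r^k * bnum r k
          = (1-r)/(1-r)^n *
            ((n.choose k : ℝ) * r^k * (1-r)^(n-k) *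
              ∑ i ∈ range (k+1), (k.choose i : ℝ) * cb r i) := by
        intro k hk
        rw [mem_range, Nat.lt_succ_iff] at hk
        unfold bnum
        have hp : (1-r)^n = (1-r)^(n-k) * (1-r)^k := by
          rw [← pow_add]; congr 1; omega
        rw [hp]
        field_simp
      rw [Finset.sum_congr rfl e1, ← Finset.mul_sum, collapse]
    rw [key, bnum]
    have e2 : ∀ i ∈ range (n+1),
        r * ((1-r)/(1-r)^n * ((n.choose i : ℝ) * r^i * cb r i))
          - (1-r)/(1-r)^n * ((n.choose i : ℝ) * cb r i)
        = (1-r)/(1-r)^n * (-((n.choose i : ℝ) * (-1)^i * (i+1 : ℝ))) := by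
      intro i _
      have hcb : cb r i * (r^(i+1) - 1) = -((-1)^i * (i+1 : ℝ)) := by
        rw [cb, div_mul_eq_mul_div, div_eq_iff (hne i), neg_mul]
        ring
      linear_combination ((1-r)/(1-r)^n * (n.choose i : ℝ)) * hcb
    have e3 : r * ((1-r)/(1-r)^n * ∑ i ∈ range (n+1), (n.choose i : ℝ) * r^i * cb r i)
        - (1-r)/(1-r)^n * ∑ i ∈ range (n+1), (n.choose i : ℝ) * cb r i
        = ∑ i ∈ range (n+1),
          (r * ((1-r)/(1-r)^n * ((n.choose i : ℝ) * r^i * cb r i))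
            - (1-r)/(1-r)^n * ((n.choose i : ℝ) * cb r i)) := by
      rw [Finset.sum_sub_distrib, ← Finset.mul_sum, ← Finset.mul_sum, ← Finset.mul_sum]
    rw [e3, Finset.sum_congr rfl e2, ← Finset.mul_sum, Finset.sum_neg_distrib]
    by_cases hn1 : n = 1
    · subst hn1
      rw [Finset.sum_range_succ, Finset.sum_range_succ, Finset.sum_range_zero]
      norm_num
      field_simp
      exact h1r
    · rw [if_neg hn1, alt2 n (by omega), neg_zero, mul_zero]

lemma carlitz_unique (r : ℝ) (h0 : 0 < r) (h1 : r < 1) (β : ℕ → ℝ)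
    (hβ : IsCarlitz r β) : ∀ n, β n = bnum r n := by
  intro n
  induction n using Nat.strong_induction_on with
  | _ n ih =>
    match n with
    | 0 => rw [hβ.1, (bnum_carlitz r h0 h1).1]
    | (n+1) =>
      have hb := (bnum_carlitz r h0 h1).2 (n+1) (by omega)
      have ha := hβ.2 (n+1) (by omega)
      have hS : ∑ k ∈ range (n+2), ((n+1).choose k : ℝ) * r^k * β k
          = (∑ k ∈ range (n+2), ((n+1).choose k : ℝ) * r^k * bnum r k)
            + r^(n+1) * (β (n+1) - bnum r (n+1)) := by
        rw [Finset.sum_range_succ, Finset.sum_range_succ (n := n+1)]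
        have e : ∀ k ∈ range (n+1), ((n+1).choose k : ℝ) * r^k * β k
            = ((n+1).choose k : ℝ) * r^k * bnum r k := by
          intro k hk
          rw [ih k (mem_range.mp hk)]
        rw [Finset.sum_congr rfl e, Nat.choose_self]
        push_cast
        ring
      rw [hS] at ha
      have hd : (r^(n+2) - 1) * (β (n+1) - bnum r (n+1)) = 0 := by
        linear_combination ha - hb
      have hne : r^(n+2) - 1 ≠ 0 := by
        have : r^(n+2) < 1 := pow_lt_one₀ h0.le h1 (by omega)
        linarith
      have := (mul_eq_zero.mp hd).resolve_left hne
      linarith [this]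

lemma poly_closed_s13 (r : ℝ) (h0 : 0 < r) (h1 : r < 1) (n : ℕ) (x : ℝ) :
    qBernoulliPoly r (bnum r) n x
    = (1-r)/(1-r)^n *
      ∑ i ∈ range (n+1), (n.choose i : ℝ) * ((r^x)^i * cb r i) := by
  have h1r : (1:ℝ) - r ≠ 0 := by linarith
  set u : ℝ := r ^ x with hu
  have hrl : ∀ l : ℕ, r ^ ((l : ℝ) * x) = u ^ l := by
    intro l
    rw [show ((l:ℝ)*x) = x*(l:ℝ) by ring, Real.rpow_mul h0.le, Real.rpow_natCast]
  rw [qBernoulliPoly]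
  have e1 : ∀ l ∈ range (n+1),
      (n.choose l : ℝ) * r ^ ((l : ℝ) * x) * (qReal r x) ^ (n - l) * bnum r l
      = (1-r)/(1-r)^n *
        ((n.choose l : ℝ) * u^l * (1-u)^(n-l) *
          ∑ i ∈ range (l+1), (l.choose i : ℝ) * cb r i) := by
    intro l hl
    rw [mem_range, Nat.lt_succ_iff] at hl
    rw [hrl, qReal, bnum]
    have hp : (1-r)^n = (1-r)^(n-l) * (1-r)^l := by
      rw [← pow_add]; congr 1; omega
    rw [hp, div_pow]
    field_simp
    ring
  rw [Finset.sum_congr rfl e1, ← Finset.mul_sum, collapse]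
  congr 1
  apply Finset.sum_congr rfl
  intro i _
  ring


/-- the symmetric closed form -/
noncomputable def G (q : ℝ) (m N c d : ℕ) (x : ℝ) : ℝ :=
  (1-q)/(1-q)^m * ∑ i ∈ Finset.range (m+1),
    (m.choose i : ℝ) * ((q ^ (((N:ℕ):ℝ) * x))^i *
      ((-1)^i * ((i:ℝ)+1) * (1 - q^(N*(i+1))) /
        ((1 - q^(c*(i+1))) * (1 - q^(d*(i+1))))))

lemma side (m w₁ w₂ : ℕ) (hw₁ : 0 < w₁) (hw₂ : 0 < w₂)
    (q : ℝ) (hq0 : 0 < q) (hq1 : q < 1) (x : ℝ) :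
    (∑ l ∈ Finset.range (m + 1),
        (m.choose l : ℝ) * (qReal q (w₁ : ℝ)) ^ ((l : ℤ) - 1) *
          (qReal q (w₂ : ℝ)) ^ (m - l) *
            qBernoulliPoly (q ^ w₁) (bnum (q ^ w₁)) l ((w₂ : ℝ) * x) *
              Tsum m (q ^ w₂) w₁ l)
    = G q m (w₁*w₂) w₁ w₂ x := by
  have h1q : (1:ℝ) - q ≠ 0 := by linarith
  have ha0 : 0 < q ^ w₁ := pow_pos hq0 _
  have hb0 : 0 < q ^ w₂ := pow_pos hq0 _
  have ha1 : q ^ w₁ < 1 := pow_lt_one₀ hq0.le hq1 hw₁.ne'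
  have hb1 : q ^ w₂ < 1 := pow_lt_one₀ hq0.le hq1 hw₂.ne'
  have h1a : (1:ℝ) - q ^ w₁ ≠ 0 := by linarith
  have h1b : (1:ℝ) - q ^ w₂ ≠ 0 := by linarith
  have hqpow : ∀ j : ℕ, 1 ≤ j → (1:ℝ) - q ^ j ≠ 0 := fun j hj =>
    one_sub_pow_ne q hq0 hq1 j hj
  set v : ℝ := q ^ ((((w₁*w₂ : ℕ)) : ℝ) * x) with hvdef
  have hv : (q ^ w₁ : ℝ) ^ (((w₂:ℕ):ℝ) * x) = v := by
    rw [hvdef, ← Real.rpow_natCast q w₁, ← Real.rpow_mul hq0.le]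
    congr 1
    push_cast
    ring
  have hqw : ∀ w : ℕ, qReal q (w : ℝ) = (1 - q^w)/(1-q) := by
    intro w; rw [qReal, Real.rpow_natCast]
  have hX : ((1 - q^w₁)/(1-q) : ℝ) ≠ 0 := div_ne_zero h1a h1q
  -- step 1 : rewrite each l-term
  have e1 : ∀ l ∈ Finset.range (m+1),
      (m.choose l : ℝ) * (qReal q (w₁ : ℝ)) ^ ((l : ℤ) - 1) *
          (qReal q (w₂ : ℝ)) ^ (m - l) *
            qBernoulliPoly (q ^ w₁) (bnum (q ^ w₁)) l ((w₂ : ℝ) * x) *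
              Tsum m (q ^ w₂) w₁ l
      = (1-q)/(1-q)^m * ∑ k ∈ Finset.range w₁,
          ((q^w₂)^k) * ((m.choose l : ℝ) * ((q^w₂)^k)^l * (1-((q^w₂)^k))^(m-l) *
            ∑ i ∈ Finset.range (l+1), (l.choose i : ℝ) * (v^i * cb (q^w₁) i)) := by
    intro l hl
    rw [Finset.mem_range, Nat.lt_succ_iff] at hl
    rw [poly_closed_s13 _ ha0 ha1, hv, hqw w₁, hqw w₂, Tsum,
      zpow_sub₀ hX, zpow_natCast, zpow_one]
    have tk : ∀ k ∈ Finset.range w₁,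
        (q^w₂) ^ ((l+1)*k) * (qReal (q^w₂) (k:ℝ))^(m-l)
        = (q^w₂)^k * ((q^w₂)^k)^l * (((1-((q^w₂)^k))/(1-q^w₂)))^(m-l) := by
      intro k _
      rw [qReal, Real.rpow_natCast]
      rw [mul_comm (l+1) k, pow_mul, pow_succ]
      ring
    rw [Finset.sum_congr rfl tk]
    have hqm : (1-q)^m = (1-q)^l * (1-q)^(m-l) := by
      rw [← pow_add]; congr 1; omega
    rw [Finset.mul_sum]
    conv_rhs => rw [Finset.mul_sum]
    apply Finset.sum_congr rfl
    intro k _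
    rw [hqm, div_pow, div_pow, div_pow]
    field_simp
  rw [Finset.sum_congr rfl e1, ← Finset.mul_sum, G, ← hvdef]
  congr 1
  rw [Finset.sum_comm]
  have e2 : ∀ k ∈ Finset.range w₁,
      ∑ l ∈ Finset.range (m+1),
        ((q^w₂)^k) * ((m.choose l : ℝ) * ((q^w₂)^k)^l * (1-((q^w₂)^k))^(m-l) *
          ∑ i ∈ Finset.range (l+1), (l.choose i : ℝ) * (v^i * cb (q^w₁) i))
      = ∑ i ∈ Finset.range (m+1),
          ((q^w₂)^k) * ((m.choose i : ℝ) * ((q^w₂)^k)^i * (v^i * cb (q^w₁) i)) := by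
    intro k _
    rw [← Finset.mul_sum, collapse, Finset.mul_sum]
  rw [Finset.sum_congr rfl e2, Finset.sum_comm]
  apply Finset.sum_congr rfl
  intro i _
  have hBne : (q^w₂)^(i+1) ≠ 1 := by
    have := hqpow (w₂*(i+1)) (Nat.mul_pos hw₂ i.succ_pos)
    rw [pow_mul] at this
    intro h; rw [h] at this; simp at this
  have hgeom := geom_sum_eq hBne w₁
  have step : ∑ k ∈ Finset.range w₁,
      ((q^w₂)^k) * ((m.choose i : ℝ) * ((q^w₂)^k)^i * (v^i * cb (q^w₁) i))
      = ((m.choose i : ℝ) * (v^i * cb (q^w₁) i)) *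
        ∑ k ∈ Finset.range w₁, ((q^w₂)^(i+1))^k := by
    rw [Finset.mul_sum]
    apply Finset.sum_congr rfl
    intro k _
    rw [pow_right_comm, pow_succ']
    ring
  rw [step, hgeom, cb]
  have hA : ((q^w₁):ℝ)^(i+1) = q^(w₁*(i+1)) := (pow_mul q w₁ (i+1)).symm
  have hB : ((q^w₂):ℝ)^(i+1) = q^(w₂*(i+1)) := (pow_mul q w₂ (i+1)).symm
  have hC : (((q^w₂):ℝ)^(i+1))^w₁ = q^(w₁*w₂*(i+1)) := by
    rw [← pow_mul, ← pow_mul]; congr 1; ring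
  rw [hC, hA, hB]
  have n1 : (1:ℝ) - q^(w₁*(i+1)) ≠ 0 := hqpow _ (Nat.mul_pos hw₁ i.succ_pos)
  have n2 : (1:ℝ) - q^(w₂*(i+1)) ≠ 0 := hqpow _ (Nat.mul_pos hw₂ i.succ_pos)
  have n3 : (1:ℝ) - q^(w₁*w₂*(i+1)) ≠ 0 := hqpow _ (Nat.mul_pos (Nat.mul_pos hw₁ hw₂) i.succ_pos)
  have n2' : q^(w₂*(i+1)) - (1:ℝ) ≠ 0 := fun h => n2 (by linarith [sub_eq_zero.mp h])
  field_simp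
  ring

lemma G_symm (q : ℝ) (m c d : ℕ) (x : ℝ) : G q m (c*d) c d x = G q m (d*c) d c x := by
  rw [mul_comm d c]
  unfold G
  congr 1
  apply Finset.sum_congr rfl
  intro i _
  ring

theorem qBernoulli_symmetry_T (m : ℕ) (w₁ w₂ : ℕ) (hw₁ : 0 < w₁) (hw₂ : 0 < w₂)
    (q : ℝ) (hq0 : 0 < q) (hq1 : q < 1) (x : ℝ)
    (β : ℝ → ℕ → ℝ) (hβ : ∀ r : ℝ, 0 < r → r < 1 → IsCarlitz r (β r)) :
    (∑ l ∈ Finset.range (m + 1),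
        (m.choose l : ℝ) * (qReal q (w₁ : ℝ)) ^ ((l : ℤ) - 1) *
          (qReal q (w₂ : ℝ)) ^ (m - l) *
            qBernoulliPoly (q ^ w₁) (β (q ^ w₁)) l ((w₂ : ℝ) * x) *
              Tsum m (q ^ w₂) w₁ l) =
      ∑ l ∈ Finset.range (m + 1),
        (m.choose l : ℝ) * (qReal q (w₂ : ℝ)) ^ ((l : ℤ) - 1) *
          (qReal q (w₁ : ℝ)) ^ (m - l) *
            qBernoulliPoly (q ^ w₂) (β (q ^ w₂)) l ((w₁ : ℝ) * x) *
              Tsum m (q ^ w₁) w₂ l := by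
  have ha0 : 0 < q ^ w₁ := pow_pos hq0 _
  have hb0 : 0 < q ^ w₂ := pow_pos hq0 _
  have ha1 : q ^ w₁ < 1 := pow_lt_one₀ hq0.le hq1 hw₁.ne'
  have hb1 : q ^ w₂ < 1 := pow_lt_one₀ hq0.le hq1 hw₂.ne'
  have h₁ : β (q ^ w₁) = bnum (q ^ w₁) :=
    funext (carlitz_unique _ ha0 ha1 _ (hβ _ ha0 ha1))
  have h₂ : β (q ^ w₂) = bnum (q ^ w₂) :=
    funext (carlitz_unique _ hb0 hb1 _ (hβ _ hb0 hb1))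
  rw [h₁, h₂, side m w₁ w₂ hw₁ hw₂ q hq0 hq1 x, side m w₂ w₁ hw₂ hw₁ q hq0 hq1 x]
  exact G_symm q m w₁ w₂ x
end

section
/- Equivalence of the two symmetry expressions: for all natural numbers m, positive integers w₁, w₂, real q with 0 < q < 1, and real x, [w₁]_q^{m-1} ∑_{k=0}^{w₁-1} q^{w₂k} β_{m,q^{w₁}}(w₂x + (w₂/w₁)k) = ∑_{l=0}^{m} C(m,l) [w₁]_q^{l-1} [w₂]_q^{m-l} β_{l,q^{w₁}}(w₂x) ∑_{k=0}^{w₁-1} q^{(l+1)w₂k} [k]_{q^{w₂}}^{m-l}. -/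
lemma qReal_add (r : ℝ) (hr : 0 < r) (x y : ℝ) :
    qReal r (x + y) = qReal r y + r ^ y * qReal r x := by
  unfold qReal
  rw [Real.rpow_add hr, ← mul_div_assoc, ← add_div]
  congr 1
  ring

lemma qB_addition (r : ℝ) (hr : 0 < r) (β : ℕ → ℝ) (n : ℕ) (x y : ℝ) :
    qBernoulliPoly r β n (x + y) =
      ∑ l ∈ Finset.range (n + 1),
        (n.choose l : ℝ) * r ^ ((l : ℝ) * y) * (qReal r y) ^ (n - l) *
          qBernoulliPoly r β l x := by
  unfold qBernoulliPoly
  have L : ∀ j ∈ Finset.range (n + 1),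
      (n.choose j : ℝ) * r ^ ((j : ℝ) * (x + y)) * (qReal r (x + y)) ^ (n - j) * β j =
      ∑ i ∈ Finset.range (n - j + 1),
        (n.choose j : ℝ) * r ^ ((j : ℝ) * (x + y)) *
          ((r ^ y * qReal r x) ^ i * (qReal r y) ^ (n - j - i) * ((n - j).choose i : ℝ)) * β j := by
    intro j hj
    rw [qReal_add r hr, add_comm (qReal r y), add_pow, Finset.mul_sum, Finset.sum_mul]
  rw [Finset.sum_congr rfl L]
  have R : ∀ l ∈ Finset.range (n + 1),
      (n.choose l : ℝ) * r ^ ((l : ℝ) * y) * (qReal r y) ^ (n - l) *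
        (∑ j ∈ Finset.range (l + 1),
          (l.choose j : ℝ) * r ^ ((j : ℝ) * x) * (qReal r x) ^ (l - j) * β j) =
      ∑ j ∈ Finset.range (l + 1),
        (n.choose l : ℝ) * r ^ ((l : ℝ) * y) * (qReal r y) ^ (n - l) *
          ((l.choose j : ℝ) * r ^ ((j : ℝ) * x) * (qReal r x) ^ (l - j) * β j) := by
    intro l _
    rw [Finset.mul_sum]
  rw [Finset.sum_congr rfl R, Finset.sum_sigma', Finset.sum_sigma']
  apply Finset.sum_nbij' (i := fun p => (⟨p.1 + p.2, p.1⟩ : Σ _ : ℕ, ℕ))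
    (j := fun p => (⟨p.2, p.1 - p.2⟩ : Σ _ : ℕ, ℕ))
  · rintro ⟨j, i⟩ hp
    simp only [Finset.mem_sigma, Finset.mem_range] at hp ⊢
    omega
  · rintro ⟨l, j⟩ hp
    simp only [Finset.mem_sigma, Finset.mem_range] at hp ⊢
    omega
  · rintro ⟨j, i⟩ hp
    simp only [Finset.mem_sigma, Finset.mem_range] at hp
    dsimp only
    simp only [Sigma.mk.inj_iff, heq_eq_eq]
    exact ⟨trivial, by omega⟩
  · rintro ⟨l, j⟩ hp
    simp only [Finset.mem_sigma, Finset.mem_range] at hp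
    dsimp only
    simp only [Sigma.mk.inj_iff, heq_eq_eq]
    exact ⟨by omega, trivial⟩
  · rintro ⟨j, i⟩ hp
    simp only [Finset.mem_sigma, Finset.mem_range] at hp
    obtain ⟨hj, hi⟩ := hp
    have hin : j + i ≤ n := by omega
    have hch : ((n - j).choose i : ℝ) * (n.choose j : ℝ) =
        (n.choose (j + i) : ℝ) * ((j + i).choose j : ℝ) := by
      rw [← Nat.cast_mul, ← Nat.cast_mul, mul_comm ((n - j).choose i)]
      congr 1
      have := Nat.choose_mul (n := n) (Nat.le_add_right j i)
      simpa using this.symm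
    have hpow : r ^ ((j : ℝ) * (x + y)) * (r ^ y) ^ i =
        r ^ (((j + i : ℕ) : ℝ) * y) * r ^ ((j : ℝ) * x) := by
      rw [← Real.rpow_natCast (r ^ y) i, ← Real.rpow_mul hr.le, ← Real.rpow_add hr,
        ← Real.rpow_add hr]
      congr 1
      push_cast
      ring
    have e1 : n - j - i = n - (j + i) := by omega
    have e2 : j + i - j = i := by omega
    dsimp only
    rw [mul_pow, e1, e2]
    linear_combination (β j * qReal r x ^ i * qReal r y ^ (n - (j + i))) *
        (r ^ ((j : ℝ) * (x + y)) * (r ^ y) ^ i) * hch +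
      (β j * qReal r x ^ i * qReal r y ^ (n - (j + i))) *
        ((n.choose (j + i) : ℝ) * (((j + i).choose j : ℕ) : ℝ)) * hpow

theorem qBernoulli_symmetry_equiv (m : ℕ) (w₁ w₂ : ℕ) (hw₁ : 0 < w₁) (hw₂ : 0 < w₂)
    (q : ℝ) (hq0 : 0 < q) (hq1 : q < 1) (x : ℝ)
    (β : ℝ → ℕ → ℝ) (hβ : ∀ r : ℝ, 0 < r → r < 1 → IsCarlitz r (β r)) :
    (qReal q (w₁ : ℝ)) ^ ((m : ℤ) - 1) *
        ∑ k ∈ Finset.range w₁,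
          q ^ (w₂ * k) *
            qBernoulliPoly (q ^ w₁) (β (q ^ w₁)) m
              ((w₂ : ℝ) * x + ((w₂ : ℝ) / (w₁ : ℝ)) * (k : ℝ)) =
      ∑ l ∈ Finset.range (m + 1),
        (m.choose l : ℝ) * (qReal q (w₁ : ℝ)) ^ ((l : ℤ) - 1) *
          (qReal q (w₂ : ℝ)) ^ (m - l) *
            qBernoulliPoly (q ^ w₁) (β (q ^ w₁)) l ((w₂ : ℝ) * x) *
              ∑ k ∈ Finset.range w₁,
                q ^ ((l + 1) * w₂ * k) * (qReal (q ^ w₂) (k : ℝ)) ^ (m - l) := by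
  have hw₁' : (w₁ : ℝ) ≠ 0 := Nat.cast_ne_zero.2 hw₁.ne'
  have hQ0 : (0 : ℝ) < q ^ w₁ := pow_pos hq0 w₁
  have hQ1 : q ^ w₁ < 1 := pow_lt_one₀ hq0.le hq1 hw₁.ne'
  have hP1 : q ^ w₂ < 1 := pow_lt_one₀ hq0.le hq1 hw₂.ne'
  have h1q : (1 : ℝ) - q ≠ 0 := by linarith
  have hA1 : (1 : ℝ) - q ^ w₁ ≠ 0 := by linarith
  have hB1 : (1 : ℝ) - q ^ w₂ ≠ 0 := by linarith
  have hAne : qReal q (w₁ : ℝ) ≠ 0 := by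
    unfold qReal
    rw [Real.rpow_natCast]
    exact div_ne_zero hA1 h1q
  -- rpow computations
  have hYk : ∀ k : ℕ, ((q ^ w₁ : ℝ)) ^ ((w₂ : ℝ) / (w₁ : ℝ) * (k : ℝ)) = q ^ (w₂ * k) := by
    intro k
    rw [← Real.rpow_natCast q w₁, ← Real.rpow_mul hq0.le,
      show (w₁ : ℝ) * ((w₂ : ℝ) / (w₁ : ℝ) * (k : ℝ)) = ((w₂ * k : ℕ) : ℝ) by
        push_cast; field_simp,
      Real.rpow_natCast]
  have hlYk : ∀ k l : ℕ, ((q ^ w₁ : ℝ)) ^ ((l : ℝ) * ((w₂ : ℝ) / (w₁ : ℝ) * (k : ℝ))) =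
      q ^ (l * (w₂ * k)) := by
    intro k l
    rw [← Real.rpow_natCast q w₁, ← Real.rpow_mul hq0.le,
      show (w₁ : ℝ) * ((l : ℝ) * ((w₂ : ℝ) / (w₁ : ℝ) * (k : ℝ))) = ((l * (w₂ * k) : ℕ) : ℝ) by
        push_cast; field_simp,
      Real.rpow_natCast]
  have hK : ∀ k : ℕ, ((q ^ w₂ : ℝ)) ^ ((k : ℝ)) = q ^ (w₂ * k) := by
    intro k
    rw [← Real.rpow_natCast q w₂, ← Real.rpow_mul hq0.le,
      show (w₂ : ℝ) * (k : ℝ) = ((w₂ * k : ℕ) : ℝ) by push_cast; ring,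
      Real.rpow_natCast]
  have f2 : ∀ k : ℕ, qReal (q ^ w₁) ((w₂ : ℝ) / (w₁ : ℝ) * (k : ℝ)) =
      qReal (q ^ w₂) (k : ℝ) * (qReal q (w₂ : ℝ) / qReal q (w₁ : ℝ)) := by
    intro k
    unfold qReal
    rw [hYk, hK, Real.rpow_natCast, Real.rpow_natCast]
    field_simp
  set β' := β (q ^ w₁) with hβ'
  set A := qReal q (w₁ : ℝ) with hA
  set B := qReal q (w₂ : ℝ) with hB
  calc A ^ ((m : ℤ) - 1) *
        ∑ k ∈ Finset.range w₁,
          q ^ (w₂ * k) *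
            qBernoulliPoly (q ^ w₁) β' m ((w₂ : ℝ) * x + ((w₂ : ℝ) / (w₁ : ℝ)) * (k : ℝ))
      = ∑ k ∈ Finset.range w₁, ∑ l ∈ Finset.range (m + 1),
          (m.choose l : ℝ) * A ^ ((l : ℤ) - 1) * B ^ (m - l) *
            qBernoulliPoly (q ^ w₁) β' l ((w₂ : ℝ) * x) *
              (q ^ ((l + 1) * w₂ * k) * (qReal (q ^ w₂) (k : ℝ)) ^ (m - l)) := by
        rw [Finset.mul_sum]
        refine Finset.sum_congr rfl fun k _ => ?_
        rw [qB_addition (q ^ w₁) hQ0 β' m ((w₂ : ℝ) * x) (((w₂ : ℝ) / (w₁ : ℝ)) * (k : ℝ)),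
          Finset.mul_sum, Finset.mul_sum]
        refine Finset.sum_congr rfl fun l hl => ?_
        rw [hlYk k l, f2 k, mul_pow, div_pow]
        have hlm : l ≤ m := by simpa [Nat.lt_succ_iff] using hl
        have key : A ^ ((m : ℤ) - 1) * (A ^ (m - l : ℕ))⁻¹ = A ^ ((l : ℤ) - 1) := by
          rw [← div_eq_mul_inv, ← zpow_natCast A (m - l), ← zpow_sub₀ hAne]
          congr 1
          push_cast [Nat.cast_sub hlm]
          ring
        have hqq : q ^ (w₂ * k) * q ^ (l * (w₂ * k)) = q ^ ((l + 1) * w₂ * k) := by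
          rw [← pow_add]
          congr 1
          ring
        rw [← key, ← hqq]
        field_simp
    _ = ∑ l ∈ Finset.range (m + 1), ∑ k ∈ Finset.range w₁,
          (m.choose l : ℝ) * A ^ ((l : ℤ) - 1) * B ^ (m - l) *
            qBernoulliPoly (q ^ w₁) β' l ((w₂ : ℝ) * x) *
              (q ^ ((l + 1) * w₂ * k) * (qReal (q ^ w₂) (k : ℝ)) ^ (m - l)) :=
        Finset.sum_comm
    _ = _ := by
        refine Finset.sum_congr rfl fun l _ => ?_
        rw [Finset.mul_sum]
end
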